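/- The N×N matrix Ã obtained by stacking A (rows indexed i = 2,…,N) on top of the row vector A_p is a two-sided inverse of D̃_{2:N+1}, the N×N matrix formed by columns 2 through N+1 of D̃; that is, Ã · D̃_{2:N+1} = I_N and D̃_{2:N+1} · Ã = I_N. -/

import Mathlib

open Polynomial

/-- `lagL τ i` is the `i`-th Lagrange basis polynomial (of degree `N - 1`)
for the nodes `τ 0, …, τ (N-1)`, satisfying `(lagL τ i).eval (τ j) = δᵢⱼ`. -/
noncomputable def lagL {N : ℕ} (τ : Fin N → ℝ) (i : Fin N) : ℝ[X] :=
  Lagrange.basis Finset.univ τ i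

/-- `lagLp τ` is the polynomial `L_p(x) = ∏ᵢ (x - τᵢ)`. -/
noncomputable def lagLp {N : ℕ} (τ : Fin N → ℝ) : ℝ[X] :=
  ∏ i, (X - C (τ i))

/-- The differentiation matrix `D`, with `D i j = L_j'(τ i)`. -/
noncomputable def matD {N : ℕ} (τ : Fin N → ℝ) : Matrix (Fin N) (Fin N) ℝ :=
  fun i j => (derivative (lagL τ j)).eval (τ i)

/-- The vector `D_p`, with `(D_p) i = L_p'(τ i)`. -/
noncomputable def vecDp {N : ℕ} (τ : Fin N → ℝ) : Fin N → ℝ :=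
  fun i => (derivative (lagLp τ)).eval (τ i)

/-- Columns `2, …, N+1` (in 1-based numbering) of the augmented differentiation
matrix `D̃ = [D  D_p]`: column `j` (0-based, `j < N - 1`) is column `j + 1` of `D`,
and the last column is `D_p`. -/
noncomputable def matDtil2 {N : ℕ} (τ : Fin N → ℝ) : Matrix (Fin N) (Fin N) ℝ :=
  fun i j => if h : (j : ℕ) + 1 < N then matD τ i ⟨(j : ℕ) + 1, h⟩ else vecDp τ i

/-- The quadrature rule with nodes `τ` and weights `w` integrates exactly all
polynomials of degree at most `2 * N - 3` over `[-1, 1]`. -/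
def IsQuadrature {N : ℕ} (τ : Fin N → ℝ) (w : Fin N → ℝ) : Prop :=
  ∀ p : ℝ[X], p.natDegree ≤ 2 * N - 3 →
    ∑ i, w i * p.eval (τ i) = ∫ t in (-1 : ℝ)..1, p.eval t

/-- The integration matrix `A` with rows indexed (0-based) by `i : Fin (N-1)`
corresponding to the node `τ (i+1)`: `A i j = ∫_{-1}^{τ (i+1)} L_j(t) dt`. -/
noncomputable def matA {N : ℕ} (τ : Fin N → ℝ) : Matrix (Fin (N - 1)) (Fin N) ℝ :=
  fun i j => ∫ t in (-1 : ℝ)..(τ ⟨(i : ℕ) + 1, by have := i.isLt; omega⟩), (lagL τ j).eval t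

/-- The row vector `A_p`, with `(A_p) j = (1/N) ∏_{k ≠ j} 1 / (τ j - τ k)`. -/
noncomputable def rowAp {N : ℕ} (τ : Fin N → ℝ) : Fin N → ℝ :=
  fun j => (1 / (N : ℝ)) * ∏ k ∈ Finset.univ.erase j, (τ j - τ k)⁻¹

/-- The matrix `Ã` obtained by stacking `A` on top of the row vector `A_p`. -/
noncomputable def matAtil {N : ℕ} (τ : Fin N → ℝ) : Matrix (Fin N) (Fin N) ℝ :=
  fun i j => if h : (i : ℕ) + 1 < N then matA τ ⟨(i : ℕ), by omega⟩ j else rowAp τ j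

/-- The adjoint integration matrix `A† = W⁻¹ Aᵀ W_{2:N}`, with columns indexed
(0-based) by `j : Fin (N-1)` corresponding to the node `τ (j+1)`. -/
noncomputable def matAdag {N : ℕ} (τ : Fin N → ℝ) (w : Fin N → ℝ) :
    Matrix (Fin N) (Fin (N - 1)) ℝ :=
  fun i j => (w i)⁻¹ * matA τ j i * w ⟨(j : ℕ) + 1, by have := j.isLt; omega⟩

/-- `polyM τ k` is the Lagrange basis polynomial (of degree `N - 3`) for the
interior nodes `τ 1, …, τ (N-2)`, satisfying `(polyM τ k).eval (τ m) = δₖₘ`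
for interior indices `m`. -/
noncomputable def polyM {N : ℕ} (τ : Fin N → ℝ) (k : Fin N) : ℝ[X] :=
  Lagrange.basis (Finset.univ.filter fun m : Fin N => 0 < (m : ℕ) ∧ (m : ℕ) < N - 1) τ k

/-- The polynomial `λ(x) = ∑ᵢ (A† r)ᵢ Lᵢ(x)`. -/
noncomputable def lamP {N : ℕ} (τ : Fin N → ℝ) (w : Fin N → ℝ) (r : Fin (N - 1) → ℝ) : ℝ[X] :=
  ∑ i, C ((matAdag τ w).mulVec r i) * lagL τ i

/-- `Ã` is a two-sided inverse of `D̃_{2:N+1}`. -/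
theorem stmt4 (N : ℕ) (hN : 3 ≤ N) (τ : Fin N → ℝ) (hmono : StrictMono τ)
    (h0 : τ ⟨0, by omega⟩ = -1) (h1 : τ ⟨N - 1, by omega⟩ = 1) :
    matAtil τ * matDtil2 τ = 1 ∧ matDtil2 τ * matAtil τ = 1 := by
  classical
  have hinj : Set.InjOn τ ↑(Finset.univ : Finset (Fin N)) := hmono.injective.injOn
  have hcard : (Finset.univ : Finset (Fin N)).card = N := by simp
  -- FTC
  have ftc : ∀ (P : ℝ[X]) (a b : ℝ),
      (∫ t in a..b, (derivative P).eval t) = P.eval b - P.eval a := by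
    intro P a b
    exact intervalIntegral.integral_eq_sub_of_hasDerivAt (fun x _ => P.hasDerivAt x)
      ((Polynomial.continuous _).intervalIntegrable a b)
  -- interpolation representation
  have hrep : ∀ q : ℝ[X], q.degree < (N : ℕ) →
      q = ∑ k, Polynomial.C (q.eval (τ k)) * lagL τ k := by
    intro q hq
    have h := Lagrange.eq_interpolate hinj (by rwa [hcard])
    exact h.trans (by rw [Lagrange.interpolate_apply]; rfl)
  have heval : ∀ q : ℝ[X], q.degree < (N : ℕ) → ∀ t : ℝ,
      ∑ k, q.eval (τ k) * (lagL τ k).eval t = q.eval t := by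
    intro q hq t
    conv_rhs => rw [hrep q hq]
    simp [eval_finset_sum]
  -- coefficient of basis
  have hbc : ∀ k : Fin N, (lagL τ k).coeff (N - 1) = Lagrange.nodalWeight Finset.univ τ k := by
    intro k
    rw [lagL, Lagrange.basis_eq_prod_sub_inv_mul_nodal_div (Finset.mem_univ k),
      ← Lagrange.nodal_erase_eq_nodal_div (Finset.mem_univ k), coeff_C_mul]
    have hmon : (Lagrange.nodal (Finset.univ.erase k) τ).Monic := Lagrange.nodal_monic
    have hdeg : (Lagrange.nodal (Finset.univ.erase k) τ).natDegree = N - 1 := by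
      rw [Lagrange.natDegree_nodal, Finset.card_erase_of_mem (Finset.mem_univ k), hcard]
    rw [← hdeg, hmon.coeff_natDegree, mul_one]
  have hcoeff : ∀ q : ℝ[X], q.degree < (N : ℕ) →
      q.coeff (N - 1) = ∑ k, q.eval (τ k) * Lagrange.nodalWeight Finset.univ τ k := by
    intro q hq
    conv_lhs => rw [hrep q hq]
    rw [finset_sum_coeff]
    exact Finset.sum_congr rfl fun k _ => by rw [coeff_C_mul, hbc]
  -- degree facts
  have hLne : ∀ k : Fin N, lagL τ k ≠ 0 := fun k =>
    Lagrange.basis_ne_zero hinj (Finset.mem_univ k)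
  have hdegL : ∀ k : Fin N, (lagL τ k).degree = ((N - 1 : ℕ) : WithBot ℕ) := fun k => by
    rw [lagL, Lagrange.degree_basis hinj (Finset.mem_univ k), hcard]
  have hdL' : ∀ k : Fin N, (derivative (lagL τ k)).degree < ((N - 1 : ℕ) : WithBot ℕ) := by
    intro k
    have := Polynomial.degree_derivative_lt (hLne k)
    rwa [hdegL k] at this
  have hdL'N : ∀ k : Fin N, (derivative (lagL τ k)).degree < (N : ℕ) := fun k =>
    lt_trans (hdL' k) (by exact_mod_cast Nat.sub_lt (by omega) one_pos)
  have hLpnodal : lagLp τ = Lagrange.nodal Finset.univ τ := rfl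
  have hdLp : (derivative (lagLp τ)).degree < (N : ℕ) := by
    have h1 : (lagLp τ).degree = (N : ℕ) := by
      rw [hLpnodal, Lagrange.degree_nodal, hcard]
    have := Polynomial.degree_derivative_lt
      (p := lagLp τ) (by rw [hLpnodal]; exact Lagrange.nodal_ne_zero)
    rwa [h1] at this
  -- eval of lagLp at nodes is 0
  have hLpz : ∀ k : Fin N, (lagLp τ).eval (τ k) = 0 := fun k => by
    rw [hLpnodal]; exact Lagrange.eval_nodal_at_node (Finset.mem_univ k)
  -- rowAp = (1/N) * nodalWeight
  have hAp : ∀ k : Fin N, rowAp τ k = (1 / (N : ℝ)) * Lagrange.nodalWeight Finset.univ τ k := by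
    intro k; rfl
  -- derivative of lagLp at node equals inverse of nodalWeight
  have hWne : ∀ k : Fin N, Lagrange.nodalWeight Finset.univ τ k ≠ 0 := fun k =>
    Lagrange.nodalWeight_ne_zero hinj (Finset.mem_univ k)
  have hDpW : ∀ k : Fin N, (derivative (lagLp τ)).eval (τ k)
      = (Lagrange.nodalWeight Finset.univ τ k)⁻¹ := by
    intro k
    have := Lagrange.nodalWeight_eq_eval_derivative_nodal (v := τ) (Finset.mem_univ k)
    rw [hLpnodal]
    rw [this, inv_inv]
  -- the key one-sided identity
  have key : matAtil τ * matDtil2 τ = 1 := by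
    ext i j
    rw [Matrix.mul_apply, Matrix.one_apply]
    by_cases hi : (i : ℕ) + 1 < N
    · -- row i of Atil is an integral row
      have hrow : ∀ k, matAtil τ i k
          = ∫ t in (-1 : ℝ)..(τ ⟨(i : ℕ) + 1, hi⟩), (lagL τ k).eval t := by
        intro k; simp only [matAtil, dif_pos hi, matA]
      set b : ℝ := τ ⟨(i : ℕ) + 1, hi⟩ with hb
      -- the column polynomial
      set q : ℝ[X] := if h : (j : ℕ) + 1 < N then derivative (lagL τ ⟨(j : ℕ) + 1, h⟩)
        else derivative (lagLp τ) with hqdef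
      have hcol : ∀ k, matDtil2 τ k j = q.eval (τ k) := by
        intro k
        by_cases hj : (j : ℕ) + 1 < N
        · simp only [matDtil2, dif_pos hj, matD, hqdef, dif_pos hj]
        · simp only [matDtil2, dif_neg hj, vecDp, hqdef, dif_neg hj]
      have hqdeg : q.degree < (N : ℕ) := by
        by_cases hj : (j : ℕ) + 1 < N
        · rw [hqdef, dif_pos hj]; exact hdL'N _
        · rw [hqdef, dif_neg hj]; exact hdLp
      have hsum : ∑ k, matAtil τ i k * matDtil2 τ k j
          = ∫ t in (-1 : ℝ)..b, ∑ k, q.eval (τ k) * (lagL τ k).eval t := by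
        rw [intervalIntegral.integral_finset_sum]
        · refine Finset.sum_congr rfl fun k _ => ?_
          rw [hrow, hcol, intervalIntegral.integral_const_mul, mul_comm]
        · intro k _
          exact (continuous_const.mul (Polynomial.continuous _)).intervalIntegrable _ _
      rw [hsum]
      have : (∫ t in (-1 : ℝ)..b, ∑ k, q.eval (τ k) * (lagL τ k).eval t)
          = ∫ t in (-1 : ℝ)..b, q.eval t := by
        refine intervalIntegral.integral_congr fun t _ => heval q hqdeg t
      rw [this]
      by_cases hj : (j : ℕ) + 1 < N
      · have hq : q = derivative (lagL τ ⟨(j : ℕ) + 1, hj⟩) := by rw [hqdef, dif_pos hj]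
        rw [hq, ftc, hb, ← h0]
        have e1 : (lagL τ ⟨(j : ℕ) + 1, hj⟩).eval (τ ⟨0, by omega⟩) = 0 :=
          Lagrange.eval_basis_of_ne (Fin.ne_of_val_ne (by simp)) (Finset.mem_univ _)
        rw [e1, sub_zero]
        by_cases hij : i = j
        · subst hij
          rw [if_pos rfl]
          exact Lagrange.eval_basis_self hinj (Finset.mem_univ _)
        · rw [if_neg hij]
          have hij' : (i : ℕ) ≠ (j : ℕ) := fun h => hij (Fin.ext h)
          exact Lagrange.eval_basis_of_ne (Fin.ne_of_val_ne (by simp only [Fin.val_mk]; omega))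
            (Finset.mem_univ _)
      · have hq : q = derivative (lagLp τ) := by rw [hqdef, dif_neg hj]
        have hij : i ≠ j := by
          intro h; subst h; omega
        rw [hq, ftc, hb, ← h0, hLpz, hLpz, if_neg hij, sub_zero]
    · -- last row
      have hrow : ∀ k, matAtil τ i k
          = (1 / (N : ℝ)) * Lagrange.nodalWeight Finset.univ τ k := by
        intro k; simp only [matAtil, dif_neg hi]; exact hAp k
      by_cases hj : (j : ℕ) + 1 < N
      · have hij : i ≠ j := by intro h; subst h; omega
        rw [if_neg hij]
        have : ∑ k, matAtil τ i k * matDtil2 τ k j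
            = (1 / (N : ℝ)) * ∑ k, (derivative (lagL τ ⟨(j : ℕ) + 1, hj⟩)).eval (τ k)
                * Lagrange.nodalWeight Finset.univ τ k := by
          rw [Finset.mul_sum]
          refine Finset.sum_congr rfl fun k _ => ?_
          rw [hrow, matDtil2]
          simp only [dif_pos hj, matD]
          ring
        rw [this, ← hcoeff _ (hdL'N _)]
        have hz : (derivative (lagL τ ⟨(j : ℕ) + 1, hj⟩)).coeff (N - 1) = 0 := by
          apply Polynomial.coeff_eq_zero_of_degree_lt
          exact hdL' _
        rw [hz, mul_zero]
      · have hij : i = j := by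
          have h1 := i.isLt; have h2 := j.isLt
          exact Fin.ext (by omega)
        rw [if_pos hij]
        have : ∑ k, matAtil τ i k * matDtil2 τ k j = ∑ k : Fin N, (1 / (N : ℝ)) := by
          refine Finset.sum_congr rfl fun k _ => ?_
          rw [hrow, matDtil2]
          simp only [dif_neg hj, vecDp]
          rw [hDpW, mul_assoc, mul_inv_cancel₀ (hWne k), mul_one]
        rw [this, Finset.sum_const, hcard, nsmul_eq_mul]
        field_simp
  exact ⟨key, mul_eq_one_comm.mp key⟩
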